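/- Let V be a finite-dimensional real inner product space, w₁,…,w_k ∈ V linearly independent with W = span(w_i), and v₁, v₂ ∈ V. Then ⟨pr_{W⊥}(v₁), pr_{W⊥}(v₂)⟩ = ⟨v₁ ∧ w₁ ∧ ⋯ ∧ w_k, v₂ ∧ w₁ ∧ ⋯ ∧ w_k⟩ / ‖w₁ ∧ ⋯ ∧ w_k‖², where pr_{W⊥} denotes orthogonal projection onto the orthogonal complement of W. -/

import Mathlib

open scoped RealInnerProductSpace

/-- The Gram determinant `det (⟪u i, u' j⟫)`, which computes the inner product of the
wedge products `u 0 ∧ ⋯ ∧ u (m-1)` and `u' 0 ∧ ⋯ ∧ u' (m-1)` for the inner product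
induced on the exterior power. -/
noncomputable def gramDet {V : Type*} [NormedAddCommGroup V] [InnerProductSpace ℝ V]
    {m : ℕ} (u u' : Fin m → V) : ℝ :=
  (Matrix.of fun i j => (⟪u i, u' j⟫ : ℝ)).det

section aux

variable {V : Type*} [NormedAddCommGroup V] [InnerProductSpace ℝ V] {k : ℕ}

lemma gramDet_row_matrix (w : Fin k → V) (u' : Fin (k + 1) → V) (x : V) :
    (Matrix.of fun i j => (⟪(Fin.cons x w : Fin (k + 1) → V) i, u' j⟫ : ℝ))
      = (Matrix.of fun i j =>
          (⟪(Fin.cons (0 : V) w : Fin (k + 1) → V) i, u' j⟫ : ℝ)).updateRow 0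
          (fun j => (⟪x, u' j⟫ : ℝ)) := by
  ext i j
  refine Fin.cases ?_ (fun i => ?_) i <;> simp [Matrix.updateRow_apply, Fin.succ_ne_zero]

lemma gramDet_row_add (w : Fin k → V) (u' : Fin (k + 1) → V) (x y : V) :
    gramDet (Fin.cons (x + y) w) u'
      = gramDet (Fin.cons x w) u' + gramDet (Fin.cons y w) u' := by
  simp only [gramDet]
  rw [gramDet_row_matrix w u' (x + y), gramDet_row_matrix w u' x, gramDet_row_matrix w u' y,
    show (fun j => (⟪x + y, u' j⟫ : ℝ)) = (fun j => (⟪x, u' j⟫ : ℝ)) + fun j => (⟪y, u' j⟫ : ℝ)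
    from funext fun j => by simp [inner_add_left]]
  exact Matrix.det_updateRow_add _ _ _ _

lemma gramDet_row_smul (w : Fin k → V) (u' : Fin (k + 1) → V) (c : ℝ) (x : V) :
    gramDet (Fin.cons (c • x) w) u' = c * gramDet (Fin.cons x w) u' := by
  simp only [gramDet]
  rw [gramDet_row_matrix w u' (c • x), gramDet_row_matrix w u' x,
    show (fun j => (⟪c • x, u' j⟫ : ℝ)) = c • fun j => (⟪x, u' j⟫ : ℝ)
    from funext fun j => by simp [inner_smul_left]]
  exact Matrix.det_updateRow_smul _ _ _ _

lemma gramDet_row_mem (w : Fin k → V) (u' : Fin (k + 1) → V) (i : Fin k) :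
    gramDet (Fin.cons (w i) w) u' = 0 := by
  refine Matrix.det_zero_of_row_eq (i := (0 : Fin (k + 1))) (j := i.succ)
    (Fin.succ_ne_zero i).symm ?_
  funext j
  simp

lemma gramDet_col_matrix (w : Fin k → V) (u : Fin (k + 1) → V) (x : V) :
    (Matrix.of fun i j => (⟪u i, (Fin.cons x w : Fin (k + 1) → V) j⟫ : ℝ))
      = (Matrix.of fun i j =>
          (⟪u i, (Fin.cons (0 : V) w : Fin (k + 1) → V) j⟫ : ℝ)).updateCol 0
          (fun i => (⟪u i, x⟫ : ℝ)) := by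
  ext i j
  refine Fin.cases ?_ (fun j => ?_) j <;> simp [Matrix.updateCol_apply, Fin.succ_ne_zero]

lemma gramDet_col_add (w : Fin k → V) (u : Fin (k + 1) → V) (x y : V) :
    gramDet u (Fin.cons (x + y) w)
      = gramDet u (Fin.cons x w) + gramDet u (Fin.cons y w) := by
  simp only [gramDet]
  rw [gramDet_col_matrix w u (x + y), gramDet_col_matrix w u x, gramDet_col_matrix w u y,
    show (fun i => (⟪u i, x + y⟫ : ℝ)) = (fun i => (⟪u i, x⟫ : ℝ)) + fun i => (⟪u i, y⟫ : ℝ)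
    from funext fun i => by simp [inner_add_right]]
  exact Matrix.det_updateCol_add _ _ _ _

lemma gramDet_col_smul (w : Fin k → V) (u : Fin (k + 1) → V) (c : ℝ) (x : V) :
    gramDet u (Fin.cons (c • x) w) = c * gramDet u (Fin.cons x w) := by
  simp only [gramDet]
  rw [gramDet_col_matrix w u (c • x), gramDet_col_matrix w u x,
    show (fun i => (⟪u i, c • x⟫ : ℝ)) = c • fun i => (⟪u i, x⟫ : ℝ)
    from funext fun i => by simp [inner_smul_right]]
  exact Matrix.det_updateCol_smul _ _ _ _

lemma gramDet_col_mem (w : Fin k → V) (u : Fin (k + 1) → V) (i : Fin k) :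
    gramDet u (Fin.cons (w i) w) = 0 := by
  refine Matrix.det_zero_of_column_eq (i := (0 : Fin (k + 1))) (j := i.succ)
    (Fin.succ_ne_zero i).symm ?_
  intro x
  simp

lemma gramDet_row_span (w : Fin k → V) (u' : Fin (k + 1) → V) {p : V}
    (hp : p ∈ Submodule.span ℝ (Set.range w)) :
    gramDet (Fin.cons p w) u' = 0 := by
  obtain ⟨c, hc⟩ := (Submodule.mem_span_range_iff_exists_fun ℝ).1 hp
  subst hc
  have H : ∀ s : Finset (Fin k),
      gramDet (Fin.cons (∑ i ∈ s, c i • w i) w) u' = 0 := by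
    intro s
    induction s using Finset.induction_on with
    | empty =>
      rw [Finset.sum_empty, show (0 : V) = (0 : ℝ) • (0 : V) by simp, gramDet_row_smul]
      ring
    | insert _ _ h ih =>
      rw [Finset.sum_insert h, gramDet_row_add, gramDet_row_smul, gramDet_row_mem, ih]
      ring
  exact H Finset.univ

lemma gramDet_col_span (w : Fin k → V) (u : Fin (k + 1) → V) {p : V}
    (hp : p ∈ Submodule.span ℝ (Set.range w)) :
    gramDet u (Fin.cons p w) = 0 := by
  obtain ⟨c, hc⟩ := (Submodule.mem_span_range_iff_exists_fun ℝ).1 hp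
  subst hc
  have H : ∀ s : Finset (Fin k),
      gramDet u (Fin.cons (∑ i ∈ s, c i • w i) w) = 0 := by
    intro s
    induction s using Finset.induction_on with
    | empty =>
      rw [Finset.sum_empty, show (0 : V) = (0 : ℝ) • (0 : V) by simp, gramDet_col_smul]
      ring
    | insert _ _ h ih =>
      rw [Finset.sum_insert h, gramDet_col_add, gramDet_col_smul, gramDet_col_mem, ih]
      ring
  exact H Finset.univ

lemma gramDet_ne_zero_of_linearIndependent {w : Fin k → V}
    (hw : LinearIndependent ℝ w) : gramDet w w ≠ 0 := by
  intro h
  obtain ⟨c, hc, hmul⟩ := Matrix.exists_mulVec_eq_zero_iff.2 h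
  set x := ∑ i, c i • w i with hx
  have hinner : ∀ i, (⟪w i, x⟫ : ℝ) = 0 := by
    intro i
    have := congrFun hmul i
    simpa [Matrix.mulVec, dotProduct, hx, inner_sum, inner_smul_right,
      mul_comm] using this
  have hxx : (⟪x, x⟫ : ℝ) = 0 := by
    rw [hx, sum_inner]
    refine Finset.sum_eq_zero fun i _ => ?_
    rw [inner_smul_left, ← hx, hinner i]
    simp
  have hx0 : x = 0 := by
    simpa using (inner_self_eq_zero (𝕜 := ℝ)).1 hxx
  exact hc (funext (Fintype.linearIndependent_iff.1 hw c (by rw [← hx, hx0])))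

end aux

theorem stmt_5 {V : Type*} [NormedAddCommGroup V] [InnerProductSpace ℝ V]
    [FiniteDimensional ℝ V] {k : ℕ} (w : Fin k → V) (hw : LinearIndependent ℝ w)
    (W : Submodule ℝ V) (hW : W = Submodule.span ℝ (Set.range w)) (v₁ v₂ : V) :
    (⟪(Submodule.orthogonalProjectionOnto Wᗮ v₁ : V), (Submodule.orthogonalProjectionOnto Wᗮ v₂ : V)⟫ : ℝ)
      = gramDet (Fin.cons v₁ w) (Fin.cons v₂ w) / gramDet w w := by
  set q₁ : V := (Submodule.orthogonalProjectionOnto Wᗮ v₁ : V) with hq₁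
  set q₂ : V := (Submodule.orthogonalProjectionOnto Wᗮ v₂ : V) with hq₂
  set p₁ : V := (Submodule.orthogonalProjectionOnto W v₁ : V) with hp₁
  set p₂ : V := (Submodule.orthogonalProjectionOnto W v₂ : V) with hp₂
  have hv₁ : v₁ = p₁ + q₁ := (Submodule.starProjection_add_starProjection_orthogonal (K := W) v₁).symm
  have hv₂ : v₂ = p₂ + q₂ := (Submodule.starProjection_add_starProjection_orthogonal (K := W) v₂).symm
  have hp₁W : p₁ ∈ Submodule.span ℝ (Set.range w) := hW ▸ (Submodule.orthogonalProjectionOnto W v₁).2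
  have hp₂W : p₂ ∈ Submodule.span ℝ (Set.range w) := hW ▸ (Submodule.orthogonalProjectionOnto W v₂).2
  have hwW : ∀ j, w j ∈ W := fun j => hW ▸ Submodule.subset_span ⟨j, rfl⟩
  have hq₁W : ∀ j, (⟪q₁, w j⟫ : ℝ) = 0 := fun j =>
    Submodule.inner_left_of_mem_orthogonal (hwW j) (Submodule.orthogonalProjectionOnto Wᗮ v₁).2
  have hwq₂ : ∀ i, (⟪w i, q₂⟫ : ℝ) = 0 := fun i =>
    Submodule.inner_right_of_mem_orthogonal (hwW i) (Submodule.orthogonalProjectionOnto Wᗮ v₂).2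
  have key : gramDet (Fin.cons v₁ w) (Fin.cons v₂ w)
      = (⟪q₁, q₂⟫ : ℝ) * gramDet w w := by
    rw [hv₁, gramDet_row_add w _ p₁ q₁, gramDet_row_span w _ hp₁W, zero_add,
      hv₂, gramDet_col_add w _ p₂ q₂, gramDet_col_span w _ hp₂W, zero_add]
    show (Matrix.of fun i j =>
        (⟪(Fin.cons q₁ w : Fin (k + 1) → V) i, (Fin.cons q₂ w : Fin (k + 1) → V) j⟫ : ℝ)).det = _
    rw [Matrix.det_succ_row_zero, Fin.sum_univ_succ]
    have hsub : ((Matrix.of fun i j =>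
        (⟪(Fin.cons q₁ w : Fin (k + 1) → V) i,
          (Fin.cons q₂ w : Fin (k + 1) → V) j⟫ : ℝ)).submatrix
        Fin.succ Fin.succ) = Matrix.of fun i j => (⟪w i, w j⟫ : ℝ) := by
      ext i j
      simp
    simp only [Matrix.of_apply, Fin.cons_zero, Fin.cons_succ, hq₁W, mul_zero, zero_mul,
      Finset.sum_const_zero, add_zero, Fin.val_zero, pow_zero, one_mul, Fin.succAbove_zero]
    rw [hsub]
    rfl
  rw [key, mul_div_assoc, div_self (gramDet_ne_zero_of_linearIndependent hw), mul_one]
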